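/- Let Q be a finite quiver without cycles and n_Q the nilpotent Lie algebra obtained by Q. Then there exists an inner product ⟨,⟩ on n_Q satisfying the following three conditions: (i) ⟨,⟩ is an algebraic Ricci soliton with Ric = −id + D, where D ∈ Der(n_Q) is diagonal with respect to the basis Path(Q); (ii) Path(Q) is an orthogonal basis with respect to ⟨,⟩; (iii) ⟨,⟩ is preserved by the action of Aut(Q) on n_Q. -/

import Mathlib

open scoped Classical

noncomputable section

variable {V E : Type*}

/-- A (positive-length) path in the quiver `(V, E, s, t)`: a nonempty list of arrows
in which consecutive arrows are composable, i.e. `t αᵢ = s αᵢ₊₁`. -/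
def IsPath (s t : E → V) (l : List E) : Prop :=
  l ≠ [] ∧ l.Chain' (fun a b => t a = s b)

/-- The source of a (nonempty) list of arrows, as an `Option`. -/
def src? (s : E → V) (l : List E) : Option V := l.head?.map s

/-- The target of a (nonempty) list of arrows, as an `Option`. -/
def tgt? (t : E → V) (l : List E) : Option V := l.getLast?.map t

/-- The quiver has no cycles: there is no path whose source equals its target. -/
def NoCycles (s t : E → V) : Prop :=
  ∀ l : List E, IsPath s t l → src? s l ≠ tgt? t l

/-- `m` is the maximum of the lengths of paths of the quiver (the length of the quiver). -/
def IsMaxPathLen (s t : E → V) (m : ℕ) : Prop :=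
  (∃ l : List E, IsPath s t l ∧ l.length = m) ∧ ∀ l : List E, IsPath s t l → l.length ≤ m

/-- The set `Path(Q)` of all paths of length `≥ 1`, as a subtype of lists of arrows. -/
abbrev PathQ (s t : E → V) := {l : List E // IsPath s t l}

/-- The underlying vector space of the Lie algebra `n_Q` obtained from the quiver:
the real vector space with basis `Path(Q)`. -/
abbrev nQ (s t : E → V) := PathQ s t →₀ ℝ

/-- The Lie bracket of two basis paths: `[x, y] = xy` if the concatenation `xy` is a path,
`[x, y] = -yx` if the concatenation `yx` is a path, and `[x, y] = 0` otherwise. -/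
def braBasis (s t : E → V) (x y : PathQ s t) : nQ s t :=
  if h : IsPath s t (x.val ++ y.val) then Finsupp.single ⟨x.val ++ y.val, h⟩ 1
  else if h' : IsPath s t (y.val ++ x.val) then -Finsupp.single ⟨y.val ++ x.val, h'⟩ 1
  else 0

/-- The Lie bracket of `n_Q`, extended bilinearly from basis paths. -/
def bra (s t : E → V) (u v : nQ s t) : nQ s t :=
  u.sum fun x cx => v.sum fun y cy => (cx * cy) • braBasis s t x y

/-- The span of all brackets of elements of two subspaces of `n_Q`. -/
def braSpan (s t : E → V) (M N : Submodule ℝ (nQ s t)) : Submodule ℝ (nQ s t) :=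
  Submodule.span ℝ {z | ∃ u ∈ M, ∃ v ∈ N, z = bra s t u v}

/-- The starting set `S` of a quiver of length `m`: the set of arrows `a` such that
`a x` is a path of length `m` for some path `x`. -/
def startSet (s t : E → V) (m : ℕ) : Set E :=
  {a | ∃ x : List E, IsPath s t x ∧ IsPath s t (a :: x) ∧ (a :: x).length = m}

/-- The arrow set `E' = (E ∖ S) ∪ {ab ∈ Path(Q) : a ∈ S, b ∈ E}` of the quiver `Q'`,
realized as a set of lists of arrows of `Q`. -/
def edgesQ' (s t : E → V) (m : ℕ) : Set (List E) :=
  {l | (∃ a : E, a ∉ startSet s t m ∧ l = [a]) ∨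
       (∃ a b : E, a ∈ startSet s t m ∧ IsPath s t [a, b] ∧ l = [a, b])}

/-- `L` is a decomposition of the list `l` of arrows as a path of the quiver `Q'`:
a nonempty chain of consecutively composable `Q'`-arrows whose concatenation is `l`. -/
def IsDecompQ' (s t : E → V) (m : ℕ) (L : List (List E)) (l : List E) : Prop :=
  L ≠ [] ∧ (∀ p ∈ L, p ∈ edgesQ' s t m) ∧
    L.Chain' (fun p q => tgt? t p = src? s q) ∧ L.flatten = l

/-- `l` underlies a path of the quiver `Q'`. -/
def IsPathQ' (s t : E → V) (m : ℕ) (l : List E) : Prop :=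
  ∃ L : List (List E), IsDecompQ' s t m L l

/-- `f : E → E` is an automorphism of the quiver `(V, E, s, t)`. -/
def IsQuivAut (s t : E → V) (f : E → E) : Prop :=
  Function.Bijective f ∧ ∀ x y : E, (t x = s y ↔ t (f x) = s (f y))

/-- `g` is an automorphism of the quiver whose arrow set is the set `ES` of lists of
arrows of `Q` (such as the quiver `Q'` with arrow set `edgesQ'`). -/
def IsQuivAutOn (s t : E → V) (ES : Set (List E)) (g : List E → List E) : Prop :=
  Set.BijOn g ES ES ∧
    ∀ p ∈ ES, ∀ q ∈ ES, (tgt? t p = src? s q ↔ tgt? t (g p) = src? s (g q))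

/-- The subspace `n' = span Path(Q')` of `n_Q`. -/
def nQ'span (s t : E → V) (m : ℕ) : Submodule ℝ (nQ s t) :=
  Submodule.span ℝ {u | ∃ p : PathQ s t, IsPathQ' s t m p.val ∧ u = Finsupp.single p 1}

/-- A single arrow, regarded as a path of length one. -/
def edgePath (s t : E → V) (a : E) : PathQ s t := ⟨[a], by refine ⟨List.cons_ne_nil _ _, ?_⟩; first | exact List.isChain_singleton a | exact List.chain'_singleton a | simp [List.Chain'] | constructor⟩

/-- The normalization `x̄ = x / |x|` of a basis path `x`, with respect to the
inner product `B`. -/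
def ebar (s t : E → V) (B : nQ s t →ₗ[ℝ] nQ s t →ₗ[ℝ] ℝ) (p : PathQ s t) : nQ s t :=
  (Real.sqrt (B (Finsupp.single p 1) (Finsupp.single p 1)))⁻¹ • Finsupp.single p 1

/-- The linear map `T` on `n_Q` realizes the action of the quiver automorphism `f` on
`Path(Q)`: it sends each basis path `l` to the basis path `l.map f`. -/
def ActsAs (s t : E → V) (f : E → E) (T : nQ s t →ₗ[ℝ] nQ s t) : Prop :=
  ∀ (l : List E) (h : IsPath s t l) (h' : IsPath s t (l.map f)),
    T (Finsupp.single ⟨l, h⟩ 1) = Finsupp.single ⟨l.map f, h'⟩ 1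

section PathLemmas

variable {s t : E → V}

lemma src?_eq (l : List E) (h : l ≠ []) : src? s l = some (s (l.head h)) := by
  simp [src?, List.head?_eq_head h]

lemma tgt?_eq (l : List E) (h : l ≠ []) : tgt? t l = some (t (l.getLast h)) := by
  simp [tgt?, List.getLast?_eq_getLast h]

lemma src?_append {x : List E} (y : List E) (hx : x ≠ []) :
    src? s (x ++ y) = src? s x := by
  cases x with
  | nil => exact absurd rfl hx
  | cons a l => simp [src?]

lemma tgt?_append (x : List E) {y : List E} (hy : y ≠ []) :
    tgt? t (x ++ y) = tgt? t y := by
  simp [tgt?, List.getLast?_append_of_ne_nil _ hy]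

lemma isPath_append_iff {x y : List E} (hx : IsPath s t x) (hy : IsPath s t y) :
    IsPath s t (x ++ y) ↔ tgt? t x = src? s y := by
  obtain ⟨hx0, hxc⟩ := hx
  obtain ⟨hy0, hyc⟩ := hy
  rw [tgt?_eq x hx0, src?_eq y hy0]
  constructor
  · intro ⟨_, hc⟩
    have := (List.isChain_append.mp hc).2.2
    have := this (x.getLast hx0) (by simp [List.getLast?_eq_getLast hx0])
      (y.head hy0) (by simp [List.head?_eq_head hy0])
    simpa using this
  · intro h
    refine ⟨by simp [hx0], List.isChain_append.mpr ⟨hxc, hyc, ?_⟩⟩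
    intro a ha b hb
    rw [List.getLast?_eq_getLast hx0, Option.mem_some_iff] at ha
    rw [List.head?_eq_head hy0, Option.mem_some_iff] at hb
    subst ha; subst hb
    exact Option.some_injective _ h

lemma IsPath.of_append_left {x y : List E} (h : IsPath s t (x ++ y)) (hx : x ≠ []) :
    IsPath s t x :=
  ⟨hx, h.2.prefix ⟨y, rfl⟩⟩

lemma IsPath.of_append_right {x y : List E} (h : IsPath s t (x ++ y)) (hy : y ≠ []) :
    IsPath s t y :=
  ⟨hy, h.2.suffix ⟨x, rfl⟩⟩

lemma IsPath.nodup (hQ : NoCycles s t) {l : List E} (h : IsPath s t l) : l.Nodup := by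
  induction l with
  | nil => simp
  | cons a m ih =>
    rcases eq_or_ne m [] with rfl | hm
    · simp
    have hm' : IsPath s t m := (show IsPath s t ([a] ++ m) by simpa using h).of_append_right hm
    refine List.nodup_cons.mpr ⟨?_, ih hm'⟩
    intro hmem
    obtain ⟨u, v, rfl⟩ := List.append_of_mem hmem
    have hdec : a :: (u ++ a :: v) = (a :: u) ++ (a :: v) := by simp
    rw [hdec] at h
    have h1 : IsPath s t (a :: u) := h.of_append_left (by simp)
    have h2 : IsPath s t (a :: v) := h.of_append_right (by simp)
    have := (isPath_append_iff h1 h2).mp h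
    have hsrc : src? s (a :: u) = src? s (a :: v) := by simp [src?]
    exact hQ _ h1 (by rw [hsrc, ← this])

lemma pathQ_finite [Finite E] [Finite V] (hQ : NoCycles s t) : Finite (PathQ s t) := by
  cases nonempty_fintype E
  have hsub : {l : List E | IsPath s t l} ⊆ {l : List E | l.length ≤ Fintype.card E} := by
    intro l hl
    exact (IsPath.nodup hQ hl).length_le_card
  exact ((List.finite_length_le E (Fintype.card E)).subset hsub).to_subtype

end PathLemmas

section Weights

variable (s t : E → V) [Fintype (PathQ s t)]

/-- Number of paths with source `v`. -/
def Np (v : V) : ℕ := (Finset.univ.filter fun i : PathQ s t => src? s i.val = some v).card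

/-- Number of paths with target `v`. -/
def Nm (v : V) : ℕ := (Finset.univ.filter fun i : PathQ s t => tgt? t i.val = some v).card

/-- The weight attached to a vertex. -/
def gam (v : V) : ℝ := 2 / (1 + (Np s t v : ℝ) + (Nm s t v : ℝ))

lemma gam_pos (v : V) : 0 < gam s t v := by
  apply div_pos (by norm_num)
  positivity

lemma gam_mul (v : V) : gam s t v * (1 + (Np s t v : ℝ) + (Nm s t v : ℝ)) = 2 := by
  rw [gam, div_mul_cancel₀]
  positivity

/-- The squared norm of a basis path: product of `gam` over internal vertices. -/
def wgt (l : List E) : ℝ := (l.dropLast.map fun a => gam s t (t a)).prod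

/-- Sum of `gam` over internal vertices. -/
def gsum (l : List E) : ℝ := (l.dropLast.map fun a => gam s t (t a)).sum

lemma wgt_pos (l : List E) : 0 < wgt s t l := by
  apply List.prod_pos
  intro x hx
  obtain ⟨a, _, rfl⟩ := List.mem_map.mp hx
  exact gam_pos s t _

variable {s t}

lemma dropLast_append' {x y : List E} (hy : y ≠ []) :
    (x ++ y).dropLast = x ++ y.dropLast := by
  rw [List.dropLast_append_of_ne_nil hy]

lemma map_prod_eq_wgt {x : List E} (hx : x ≠ []) (g := fun a => gam s t (t a)) :
    ((x.map fun a => gam s t (t a)).prod) = wgt s t x * gam s t (t (x.getLast hx)) := by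
  conv_lhs => rw [← List.dropLast_append_getLast hx]
  simp [wgt, mul_comm]

lemma wgt_append {x y : List E} (hx : x ≠ []) (hy : y ≠ []) :
    wgt s t (x ++ y) = wgt s t x * gam s t (t (x.getLast hx)) * wgt s t y := by
  rw [wgt, dropLast_append' hy, List.map_append, List.prod_append, map_prod_eq_wgt hx]
  rfl

lemma gsum_append {x y : List E} (hx : x ≠ []) (hy : y ≠ []) :
    gsum s t (x ++ y) = gsum s t x + gam s t (t (x.getLast hx)) + gsum s t y := by
  rw [gsum, dropLast_append' hy, List.map_append, List.sum_append]
  congr 1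
  conv_lhs => rw [← List.dropLast_append_getLast hx]
  simp [gsum]

end Weights

section Bform

variable (s t : E → V) [Fintype (PathQ s t)]

/-- The inner product: paths orthogonal with `⟨p,p⟩ = wgt p`. -/
def Bform : nQ s t →ₗ[ℝ] nQ s t →ₗ[ℝ] ℝ :=
  LinearMap.mk₂ ℝ (fun u v => ∑ p : PathQ s t, wgt s t p.val * u p * v p)
    (by intro u u' v; rw [← Finset.sum_add_distrib]
        exact Finset.sum_congr rfl fun p _ => by simp [Finsupp.add_apply]; ring)
    (by intro c u v; rw [Finset.smul_sum]
        exact Finset.sum_congr rfl fun p _ => by simp [Finsupp.smul_apply]; ring)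
    (by intro u v v'; rw [← Finset.sum_add_distrib]
        exact Finset.sum_congr rfl fun p _ => by simp [Finsupp.add_apply]; ring)
    (by intro c u v; rw [Finset.smul_sum]
        exact Finset.sum_congr rfl fun p _ => by simp [Finsupp.smul_apply]; ring)

variable {s t}

lemma Bform_apply (u v : nQ s t) :
    Bform s t u v = ∑ p : PathQ s t, wgt s t p.val * u p * v p := rfl

lemma Bform_single_right (u : nQ s t) (q : PathQ s t) (c : ℝ) :
    Bform s t u (Finsupp.single q c) = wgt s t q.val * u q * c := by
  rw [Bform_apply]
  rw [Finset.sum_eq_single q]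
  · simp
  · intro p _ hpq
    simp [Finsupp.single_apply, Ne.symm hpq]
  · simp

lemma Bform_single_single (p q : PathQ s t) (c d : ℝ) :
    Bform s t (Finsupp.single p c) (Finsupp.single q d) =
      if p = q then wgt s t p.val * c * d else 0 := by
  rw [Bform_single_right]
  rcases eq_or_ne p q with rfl | h
  · simp
  · simp [Finsupp.single_apply, Ne.symm h, h]

lemma Bform_symm (u v : nQ s t) : Bform s t u v = Bform s t v u := by
  rw [Bform_apply, Bform_apply]
  exact Finset.sum_congr rfl fun p _ => by ring

lemma Bform_pos {u : nQ s t} (hu : u ≠ 0) : 0 < Bform s t u u := by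
  obtain ⟨q, hq⟩ : ∃ q, u q ≠ 0 := by
    by_contra h
    push_neg at h
    exact hu (Finsupp.ext h)
  rw [Bform_apply]
  apply Finset.sum_pos'
  · intro p _
    rw [mul_assoc]
    exact mul_nonneg (wgt_pos s t p.val).le (mul_self_nonneg _)
  · refine ⟨q, Finset.mem_univ q, ?_⟩
    rw [mul_assoc]
    exact mul_pos (wgt_pos s t q.val) (mul_self_pos.mpr hq)

lemma Bform_eq_zero_iff (u : nQ s t) : (∀ q : PathQ s t, Bform s t u (Finsupp.single q 1) = 0) → u = 0 := by
  intro h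
  ext q
  have := h q
  rw [Bform_single_right] at this
  have hw := wgt_pos s t q.val
  rw [mul_one] at this
  have := (mul_eq_zero.mp this).resolve_left (ne_of_gt hw)
  simpa using this

end Bform

section BraLemmas

variable {s t : E → V}

lemma bra_single_single (x y : PathQ s t) (c d : ℝ) :
    bra s t (Finsupp.single x c) (Finsupp.single y d) = (c * d) • braBasis s t x y := by
  rw [bra, Finsupp.sum_single_index, Finsupp.sum_single_index]
  · simp
  · simp

lemma bra_eq_sum [Fintype (PathQ s t)] (u v : nQ s t) :
    bra s t u v = ∑ x : PathQ s t, ∑ y : PathQ s t, (u x * v y) • braBasis s t x y := by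
  rw [bra, Finsupp.sum_fintype]
  · refine Finset.sum_congr rfl fun x _ => ?_
    rw [Finsupp.sum_fintype]
    simp
  · intro x
    simp

/-- Both `xy` and `yx` cannot be paths. -/
lemma not_both_paths (hQ : NoCycles s t) {x y : List E} (hx : x ≠ []) (hy : y ≠ [])
    (h1 : IsPath s t (x ++ y)) (h2 : IsPath s t (y ++ x)) : False := by
  have hxp : IsPath s t x := h1.of_append_left hx
  have hyp : IsPath s t y := h1.of_append_right hy
  have e1 := (isPath_append_iff hxp hyp).mp h1
  have e2 := (isPath_append_iff hyp hxp).mp h2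
  exact hQ _ h1 (by rw [src?_append y hx, tgt?_append x hy, ← e2])

/-- `p ++ i = i ++ q` is impossible for paths. -/
lemma no_overlap_left (hQ : NoCycles s t) {p i q : List E} (hp : p ≠ []) (hi : i ≠ [])
    (hpath : IsPath s t (p ++ i)) (heq : p ++ i = i ++ q) : False := by
  have hnd := hpath.nodup hQ
  have hhead : p.head? = i.head? := by
    have h1 : (p ++ i).head? = p.head? := by cases p with
      | nil => exact absurd rfl hp
      | cons a l => simp
    have h2 : (i ++ q).head? = i.head? := by cases i with
      | nil => exact absurd rfl hi
      | cons a l => simp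
    rw [← h1, heq, h2]
  obtain ⟨a, ha⟩ : ∃ a, p.head? = some a := by
    cases p with
    | nil => exact absurd rfl hp
    | cons a l => exact ⟨a, rfl⟩
  have hap : a ∈ p := List.mem_of_mem_head? (by rw [ha]; rfl)
  have hai : a ∈ i := List.mem_of_mem_head? (by rw [← hhead, ha]; rfl)
  exact (List.disjoint_of_nodup_append hnd) hap hai

/-- `i ++ p = q ++ i` is impossible for paths. -/
lemma no_overlap_right (hQ : NoCycles s t) {p i q : List E} (hp : p ≠ []) (hi : i ≠ [])
    (hpath : IsPath s t (i ++ p)) (heq : i ++ p = q ++ i) : False := by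
  have hnd := hpath.nodup hQ
  have hlast : p.getLast? = i.getLast? := by
    have h1 : (i ++ p).getLast? = p.getLast? := List.getLast?_append_of_ne_nil _ hp
    have h2 : (q ++ i).getLast? = i.getLast? := List.getLast?_append_of_ne_nil _ hi
    rw [← h1, heq, h2]
  obtain ⟨a, ha⟩ : ∃ a, p.getLast? = some a := by
    cases hpl : p.getLast? with
    | none => exact absurd (List.getLast?_eq_none_iff.mp hpl) hp
    | some a => exact ⟨a, rfl⟩
  have hap : a ∈ p := List.mem_of_mem_getLast? (by rw [ha]; rfl)
  have hai : a ∈ i := List.mem_of_mem_getLast? (by rw [← hlast, ha]; rfl)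
  exact (List.disjoint_of_nodup_append hnd) hai hap

end BraLemmas

section SplitSum

variable {s t : E → V}

/-- The prefix path of `p` of length `k+1` (junk value `p` if out of range). -/
def takeP (p : PathQ s t) (k : ℕ) : PathQ s t :=
  if h : k + 1 < p.val.length then
    ⟨p.val.take (k+1), by
      refine ⟨?_, p.2.2.take _⟩
      intro hc
      rcases List.take_eq_nil_iff.mp hc with h1 | h1 <;>
        first | omega | exact p.2.1 h1⟩
  else p

/-- The suffix path of `p` dropping the first `k+1` arrows (junk value `p` if out of range). -/
def dropP (p : PathQ s t) (k : ℕ) : PathQ s t :=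
  if h : k + 1 < p.val.length then
    ⟨p.val.drop (k+1), by
      refine ⟨?_, p.2.2.drop _⟩
      simp only [ne_eq, List.drop_eq_nil_iff]
      omega⟩
  else p

lemma takeP_val (p : PathQ s t) (k : ℕ) (h : k + 1 < p.val.length) :
    (takeP p k).val = p.val.take (k+1) := by rw [takeP, dif_pos h]

lemma dropP_val (p : PathQ s t) (k : ℕ) (h : k + 1 < p.val.length) :
    (dropP p k).val = p.val.drop (k+1) := by rw [dropP, dif_pos h]

lemma split_sum [Fintype (PathQ s t)] (p : PathQ s t) (G : PathQ s t → PathQ s t → ℝ) :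
    (∑ i : PathQ s t, ∑ j : PathQ s t, (if i.val ++ j.val = p.val then G i j else 0))
      = ∑ k ∈ Finset.range (p.val.length - 1), G (takeP p k) (dropP p k) := by
  rw [← Finset.sum_product']
  rw [← Finset.sum_filter]
  have hmem : ∀ ij : PathQ s t × PathQ s t,
      ij ∈ Finset.filter (fun x => x.1.val ++ x.2.val = p.val) (Finset.univ ×ˢ Finset.univ) ↔
        ij.1.val ++ ij.2.val = p.val := by
    intro ij
    simp [Finset.mem_filter]
  refine Finset.sum_nbij' (fun ij => ij.1.val.length - 1) (fun k => (takeP p k, dropP p k))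
    ?_ ?_ ?_ ?_ ?_
  · rintro ij hij
    rw [hmem] at hij
    have hlen : ij.1.val.length + ij.2.val.length = p.val.length := by rw [← hij]; simp
    have h1 : 1 ≤ ij.1.val.length := List.length_pos_iff.mpr ij.1.2.1
    have h2 : 1 ≤ ij.2.val.length := List.length_pos_iff.mpr ij.2.2.1
    simp only [Finset.mem_range]
    omega
  · intro k hk
    rw [Finset.mem_range] at hk
    have h : k + 1 < p.val.length := by omega
    rw [hmem]
    rw [takeP_val p k h, dropP_val p k h]
    simp
  · rintro ij hij
    rw [hmem] at hij
    have hlen : ij.1.val.length + ij.2.val.length = p.val.length := by rw [← hij]; simp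
    have h1 : 1 ≤ ij.1.val.length := List.length_pos_iff.mpr ij.1.2.1
    have h2 : 1 ≤ ij.2.val.length := List.length_pos_iff.mpr ij.2.2.1
    have h : (ij.1.val.length - 1) + 1 < p.val.length := by omega
    have hil : ij.1.val.length - 1 + 1 = ij.1.val.length := by omega
    have e1 : takeP p (ij.1.val.length - 1) = ij.1 := by
      apply Subtype.ext
      rw [takeP_val p _ h, hil, ← hij, List.take_left]
    have e2 : dropP p (ij.1.val.length - 1) = ij.2 := by
      apply Subtype.ext
      rw [dropP_val p _ h, hil, ← hij, List.drop_left]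
    exact Prod.ext e1 e2
  · intro k hk
    rw [Finset.mem_range] at hk
    have h : k + 1 < p.val.length := by omega
    simp only
    rw [takeP_val p k h, List.length_take]
    omega
  · rintro ij hij
    rw [hmem] at hij
    have hlen : ij.1.val.length + ij.2.val.length = p.val.length := by rw [← hij]; simp
    have h1 : 1 ≤ ij.1.val.length := List.length_pos_iff.mpr ij.1.2.1
    have h2 : 1 ≤ ij.2.val.length := List.length_pos_iff.mpr ij.2.2.1
    have h : (ij.1.val.length - 1) + 1 < p.val.length := by omega
    have hil : ij.1.val.length - 1 + 1 = ij.1.val.length := by omega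
    have e1 : takeP p (ij.1.val.length - 1) = ij.1 := by
      apply Subtype.ext
      rw [takeP_val p _ h, hil, ← hij, List.take_left]
    have e2 : dropP p (ij.1.val.length - 1) = ij.2 := by
      apply Subtype.ext
      rw [dropP_val p _ h, hil, ← hij, List.drop_left]
    rw [e1, e2]

end SplitSum

section Eval

variable {s t : E → V}

lemma bb_pos {x y : PathQ s t} (h : IsPath s t (x.val ++ y.val)) :
    braBasis s t x y = Finsupp.single ⟨x.val ++ y.val, h⟩ 1 := dif_pos h

lemma bb_neg {x y : PathQ s t} (h : ¬ IsPath s t (x.val ++ y.val))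
    (h' : IsPath s t (y.val ++ x.val)) :
    braBasis s t x y = -Finsupp.single ⟨y.val ++ x.val, h'⟩ 1 := by
  rw [braBasis, dif_neg h, dif_pos h']

lemma bb_zero {x y : PathQ s t} (h : ¬ IsPath s t (x.val ++ y.val))
    (h' : ¬ IsPath s t (y.val ++ x.val)) : braBasis s t x y = 0 := by
  rw [braBasis, dif_neg h, dif_neg h']

variable [Fintype (PathQ s t)]

lemma prod_zero_of_ne (hQ : NoCycles s t) {p q : PathQ s t} (hpq : p ≠ q) (i j : PathQ s t) :
    Bform s t (braBasis s t p i) (Finsupp.single j 1) *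
      Bform s t (braBasis s t q i) (Finsupp.single j 1) = 0 := by
  by_cases h1 : IsPath s t (p.val ++ i.val)
  · rw [bb_pos h1, Bform_single_single]
    by_cases hj : (⟨p.val ++ i.val, h1⟩ : PathQ s t) = j
    · rw [if_pos hj]
      by_cases h2 : IsPath s t (q.val ++ i.val)
      · rw [bb_pos h2, Bform_single_single]
        rw [if_neg, mul_zero]
        intro hj2
        apply hpq
        have : p.val ++ i.val = q.val ++ i.val := by
          have := hj.trans hj2.symm
          exact congrArg Subtype.val this
        exact Subtype.ext (List.append_cancel_right this)
      · by_cases h2' : IsPath s t (i.val ++ q.val)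
        · rw [bb_neg h2 h2', map_neg, LinearMap.neg_apply, Bform_single_single]
          rw [if_neg, neg_zero, mul_zero]
          intro hj2
          have : p.val ++ i.val = i.val ++ q.val := congrArg Subtype.val (hj.trans hj2.symm)
          exact no_overlap_left hQ p.2.1 i.2.1 h1 this
        · rw [bb_zero h2 h2', map_zero, LinearMap.zero_apply, mul_zero]
    · rw [if_neg hj, zero_mul]
  · by_cases h1' : IsPath s t (i.val ++ p.val)
    · rw [bb_neg h1 h1', map_neg, LinearMap.neg_apply, Bform_single_single]
      by_cases hj : (⟨i.val ++ p.val, h1'⟩ : PathQ s t) = j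
      · rw [if_pos hj]
        by_cases h2 : IsPath s t (q.val ++ i.val)
        · rw [bb_pos h2, Bform_single_single]
          rw [if_neg, mul_zero]
          intro hj2
          have : i.val ++ p.val = q.val ++ i.val := congrArg Subtype.val (hj.trans hj2.symm)
          exact no_overlap_right hQ p.2.1 i.2.1 h1' this
        · by_cases h2' : IsPath s t (i.val ++ q.val)
          · rw [bb_neg h2 h2', map_neg, LinearMap.neg_apply, Bform_single_single]
            rw [if_neg, neg_zero, mul_zero]
            intro hj2
            apply hpq
            have : i.val ++ p.val = i.val ++ q.val := congrArg Subtype.val (hj.trans hj2.symm)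
            exact Subtype.ext (List.append_cancel_left this)
          · rw [bb_zero h2 h2', map_zero, LinearMap.zero_apply, mul_zero]
      · rw [if_neg hj, neg_zero, zero_mul]
    · rw [bb_zero h1 h1', map_zero, LinearMap.zero_apply, zero_mul]

lemma prod_zero_of_ne' (hQ : NoCycles s t) {p q : PathQ s t} (hpq : p ≠ q) (i j : PathQ s t) :
    Bform s t (braBasis s t i j) (Finsupp.single p 1) *
      Bform s t (braBasis s t i j) (Finsupp.single q 1) = 0 := by
  by_cases h1 : IsPath s t (i.val ++ j.val)
  · rw [bb_pos h1, Bform_single_single, Bform_single_single]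
    by_cases hp : (⟨i.val ++ j.val, h1⟩ : PathQ s t) = p
    · rw [if_neg (fun hq => hpq ((hp.symm.trans hq) ▸ rfl)), mul_zero]
    · rw [if_neg hp, zero_mul]
  · by_cases h1' : IsPath s t (j.val ++ i.val)
    · simp only [bb_neg h1 h1', map_neg, LinearMap.neg_apply, Bform_single_single]
      by_cases hp : (⟨j.val ++ i.val, h1'⟩ : PathQ s t) = p
      · rw [if_neg (fun hq => hpq ((hp.symm.trans hq) ▸ rfl)), neg_zero, mul_zero]
      · rw [if_neg hp, neg_zero, zero_mul]
    · rw [bb_zero h1 h1', map_zero, LinearMap.zero_apply, zero_mul]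

end Eval

section Diag

variable {s t : E → V} [Fintype (PathQ s t)]

/-- Target vertex of a path. -/
def tgtV (p : PathQ s t) : V := t (p.val.getLast p.2.1)

/-- Source vertex of a path. -/
def srcV (p : PathQ s t) : V := s (p.val.head p.2.1)

lemma tgt?_eqV (p : PathQ s t) : tgt? t p.val = some (tgtV p) := tgt?_eq _ _

lemma src?_eqV (p : PathQ s t) : src? s p.val = some (srcV p) := src?_eq _ _

lemma junction {x y : PathQ s t} (h : IsPath s t (x.val ++ y.val)) :
    tgtV x = srcV y := by
  have := (isPath_append_iff x.2 y.2).mp h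
  rw [tgt?_eqV, src?_eqV] at this
  exact Option.some_injective _ this

lemma wgt_appendV {x y : PathQ s t} :
    wgt s t (x.val ++ y.val) = wgt s t x.val * gam s t (tgtV x) * wgt s t y.val :=
  wgt_append x.2.1 y.2.1

lemma sumj_sq (a : PathQ s t) :
    ∑ j : PathQ s t, (wgt s t j.val)⁻¹ *
      (Bform s t (Finsupp.single a 1) (Finsupp.single j 1) *
       Bform s t (Finsupp.single a 1) (Finsupp.single j 1)) = wgt s t a.val := by
  rw [Finset.sum_eq_single a]
  · rw [Bform_single_single, if_pos rfl]
    have := (wgt_pos s t a.val).ne'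
    field_simp
    try ring
  · intro j _ hja
    rw [Bform_single_single, if_neg (Ne.symm hja), mul_zero, mul_zero]
  · simp

def TT1 (p q : PathQ s t) : ℝ := ∑ i : PathQ s t, ∑ j : PathQ s t,
  (wgt s t i.val)⁻¹ * ((wgt s t j.val)⁻¹ *
    (Bform s t (braBasis s t p i) (Finsupp.single j 1) *
     Bform s t (braBasis s t q i) (Finsupp.single j 1)))

def TT2 (p q : PathQ s t) : ℝ := ∑ i : PathQ s t, ∑ j : PathQ s t,
  (wgt s t i.val)⁻¹ * ((wgt s t j.val)⁻¹ *
    (Bform s t (braBasis s t i j) (Finsupp.single p 1) *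
     Bform s t (braBasis s t i j) (Finsupp.single q 1)))

lemma TT1_offdiag (hQ : NoCycles s t) {p q : PathQ s t} (hpq : p ≠ q) : TT1 p q = 0 := by
  rw [TT1]
  refine Finset.sum_eq_zero fun i _ => Finset.sum_eq_zero fun j _ => ?_
  rw [prod_zero_of_ne hQ hpq i j, mul_zero, mul_zero]

lemma TT2_offdiag (hQ : NoCycles s t) {p q : PathQ s t} (hpq : p ≠ q) : TT2 p q = 0 := by
  rw [TT2]
  refine Finset.sum_eq_zero fun i _ => Finset.sum_eq_zero fun j _ => ?_
  rw [prod_zero_of_ne' hQ hpq i j, mul_zero, mul_zero]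

lemma TT1_diag (hQ : NoCycles s t) (p : PathQ s t) :
    TT1 p p = wgt s t p.val * (gam s t (tgtV p) * (Np s t (tgtV p) : ℝ)
      + gam s t (srcV p) * (Nm s t (srcV p) : ℝ)) := by
  rw [TT1]
  have key : ∀ i : PathQ s t,
      (∑ j : PathQ s t, (wgt s t i.val)⁻¹ * ((wgt s t j.val)⁻¹ *
        (Bform s t (braBasis s t p i) (Finsupp.single j 1) *
         Bform s t (braBasis s t p i) (Finsupp.single j 1))))
      = (if IsPath s t (p.val ++ i.val) then wgt s t p.val * gam s t (tgtV p) else 0)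
        + (if IsPath s t (i.val ++ p.val) then wgt s t p.val * gam s t (srcV p) else 0) := by
    intro i
    rw [← Finset.mul_sum]
    by_cases h1 : IsPath s t (p.val ++ i.val)
    · have h2 : ¬ IsPath s t (i.val ++ p.val) := fun h2 =>
        not_both_paths hQ p.2.1 i.2.1 h1 h2
      rw [if_pos h1, if_neg h2, add_zero]
      rw [bb_pos h1, sumj_sq ⟨p.val ++ i.val, h1⟩]
      have : wgt s t (p.val ++ i.val)
          = wgt s t p.val * gam s t (tgtV p) * wgt s t i.val :=
        wgt_appendV (x := p) (y := i)
      rw [this]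
      have := (wgt_pos s t i.val).ne'
      field_simp
      try ring
    · by_cases h1' : IsPath s t (i.val ++ p.val)
      · rw [if_neg h1, if_pos h1', zero_add]
        rw [bb_neg h1 h1']
        simp only [map_neg, LinearMap.neg_apply, neg_mul_neg]
        rw [sumj_sq ⟨i.val ++ p.val, h1'⟩]
        have heq : wgt s t (i.val ++ p.val)
            = wgt s t i.val * gam s t (tgtV i) * wgt s t p.val :=
          wgt_appendV (x := i) (y := p)
        rw [heq, junction (x := i) (y := p) h1']
        have := (wgt_pos s t i.val).ne'
        field_simp
        try ring
      · rw [if_neg h1, if_neg h1', add_zero]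
        rw [bb_zero h1 h1']
        simp
  rw [Finset.sum_congr rfl fun i _ => key i]
  rw [Finset.sum_add_distrib]
  have e1 : (∑ i : PathQ s t,
      if IsPath s t (p.val ++ i.val) then wgt s t p.val * gam s t (tgtV p) else 0)
      = (Np s t (tgtV p) : ℝ) * (wgt s t p.val * gam s t (tgtV p)) := by
    rw [← Finset.sum_filter, Finset.sum_const]
    have hfil : Finset.filter (fun i : PathQ s t => IsPath s t (p.val ++ i.val)) Finset.univ
        = Finset.filter (fun i : PathQ s t => src? s i.val = some (tgtV p)) Finset.univ := by
      apply Finset.filter_congr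
      intro i _
      rw [isPath_append_iff p.2 i.2, tgt?_eqV]
      exact eq_comm
    rw [hfil, Np, nsmul_eq_mul]
  have e2 : (∑ i : PathQ s t,
      if IsPath s t (i.val ++ p.val) then wgt s t p.val * gam s t (srcV p) else 0)
      = (Nm s t (srcV p) : ℝ) * (wgt s t p.val * gam s t (srcV p)) := by
    rw [← Finset.sum_filter, Finset.sum_const]
    have hfil : Finset.filter (fun i : PathQ s t => IsPath s t (i.val ++ p.val)) Finset.univ
        = Finset.filter (fun i : PathQ s t => tgt? t i.val = some (srcV p)) Finset.univ := by
      apply Finset.filter_congr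
      intro i _
      rw [isPath_append_iff i.2 p.2, src?_eqV]
    rw [hfil, Nm, nsmul_eq_mul]
  rw [e1, e2]
  ring

end Diag

section Diag2

variable {s t : E → V} [Fintype (PathQ s t)]

lemma gsum_eq_range (l : List E) :
    gsum s t l = ∑ k ∈ Finset.range (l.length - 1),
      ((l[k]?).map fun a => gam s t (t a)).getD 0 := by
  induction l with
  | nil => simp [gsum]
  | cons a m ih =>
    cases m with
    | nil => simp [gsum]
    | cons b r =>
      have hl : (a :: b :: r).length - 1 = (b :: r).length - 1 + 1 := by
        simp
      rw [hl, Finset.sum_range_succ']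
      have h0 : (((a :: b :: r)[0]?).map fun x => gam s t (t x)).getD 0 = gam s t (t a) := rfl
      rw [h0]
      have hsh : ∀ k, (((a :: b :: r)[k+1]?).map fun x => gam s t (t x)).getD 0
          = (((b :: r)[k]?).map fun x => gam s t (t x)).getD 0 := fun k => by simp
      have : gsum s t (a :: b :: r) = gam s t (t a) + gsum s t (b :: r) := by
        simp [gsum]
      rw [this, ih]
      rw [Finset.sum_congr rfl fun k _ => hsh k]
      ring

lemma gam_srcV_dropP (p : PathQ s t) (k : ℕ) (hk : k < p.val.length - 1) :
    gam s t (srcV (dropP p k)) = ((p.val[k]?).map fun a => gam s t (t a)).getD 0 := by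
  have h : k + 1 < p.val.length := by omega
  have hk' : k < p.val.length := by omega
  have hval : (dropP p k).val = p.val.drop (k+1) := dropP_val p k h
  have hhead : (dropP p k).val.head? = p.val[k+1]? := by
    rw [hval, List.head?_eq_getElem?, List.getElem?_drop]
  have hsrc : src? s (dropP p k).val = some (s (p.val[k+1]'h)) := by
    rw [src?, hhead, List.getElem?_eq_getElem h]
    rfl
  have hsrc2 := src?_eqV (dropP p k)
  have hv : srcV (dropP p k) = s (p.val[k+1]'h) :=
    Option.some_injective _ (hsrc2.symm.trans hsrc)
  have hchain : t (p.val[k]'hk') = s (p.val[k+1]'h) := by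
    have := List.isChain_iff_getElem.mp p.2.2 k (by omega)
    simpa using this
  rw [hv, ← hchain, List.getElem?_eq_getElem hk']
  rfl

lemma TT2_pointwise (hQ : NoCycles s t) (p i j : PathQ s t) :
    (wgt s t i.val)⁻¹ * ((wgt s t j.val)⁻¹ *
      (Bform s t (braBasis s t i j) (Finsupp.single p 1) *
       Bform s t (braBasis s t i j) (Finsupp.single p 1)))
    = (if i.val ++ j.val = p.val then wgt s t p.val * gam s t (srcV j) else 0)
      + (if j.val ++ i.val = p.val then wgt s t p.val * gam s t (srcV i) else 0) := by
  by_cases hij : i.val ++ j.val = p.val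
  · have h1 : IsPath s t (i.val ++ j.val) := by rw [hij]; exact p.2
    have hji : ¬ (j.val ++ i.val = p.val) := by
      intro hji
      exact no_overlap_left hQ i.2.1 j.2.1 h1 (hij.trans hji.symm)
    rw [if_pos hij, if_neg hji, add_zero]
    rw [bb_pos h1, Bform_single_single, if_pos (Subtype.ext hij)]
    have hw : wgt s t p.val = wgt s t i.val * gam s t (srcV j) * wgt s t j.val := by
      rw [← hij, wgt_appendV (x := i) (y := j), junction (x := i) (y := j) h1]
    rw [hw]
    have hi := (wgt_pos s t i.val).ne'
    have hj := (wgt_pos s t j.val).ne'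
    field_simp
    rw [hij, hw]
    ring
  · by_cases hji : j.val ++ i.val = p.val
    · have h1' : IsPath s t (j.val ++ i.val) := by rw [hji]; exact p.2
      have h1 : ¬ IsPath s t (i.val ++ j.val) := fun h1 =>
        not_both_paths hQ i.2.1 j.2.1 h1 h1'
      rw [if_neg hij, if_pos hji, zero_add]
      rw [bb_neg h1 h1']
      simp only [map_neg, LinearMap.neg_apply, neg_mul_neg]
      rw [Bform_single_single, if_pos (Subtype.ext hji)]
      have hw : wgt s t p.val = wgt s t j.val * gam s t (srcV i) * wgt s t i.val := by
        rw [← hji, wgt_appendV (x := j) (y := i), junction (x := j) (y := i) h1']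
      rw [hw]
      have hi := (wgt_pos s t i.val).ne'
      have hj := (wgt_pos s t j.val).ne'
      field_simp
      rw [hji, hw]
      ring
    · rw [if_neg hij, if_neg hji, add_zero]
      by_cases h1 : IsPath s t (i.val ++ j.val)
      · rw [bb_pos h1, Bform_single_single, if_neg (fun hc => hij (congrArg Subtype.val hc))]
        ring
      · by_cases h1' : IsPath s t (j.val ++ i.val)
        · rw [bb_neg h1 h1']
          simp only [map_neg, LinearMap.neg_apply, neg_mul_neg]
          rw [Bform_single_single, if_neg (fun hc => hji (congrArg Subtype.val hc))]
          ring
        · rw [bb_zero h1 h1']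
          simp

lemma TT2_diag (hQ : NoCycles s t) (p : PathQ s t) :
    TT2 p p = 2 * (wgt s t p.val * gsum s t p.val) := by
  rw [TT2]
  rw [Finset.sum_congr rfl fun i _ =>
    Finset.sum_congr rfl fun j _ => TT2_pointwise hQ p i j]
  rw [Finset.sum_congr rfl fun i _ => Finset.sum_add_distrib]
  rw [Finset.sum_add_distrib]
  have e1 : (∑ i : PathQ s t, ∑ j : PathQ s t,
      if i.val ++ j.val = p.val then wgt s t p.val * gam s t (srcV j) else 0)
      = wgt s t p.val * gsum s t p.val := by
    rw [split_sum p (fun i j => wgt s t p.val * gam s t (srcV j))]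
    rw [gsum_eq_range, Finset.mul_sum]
    refine Finset.sum_congr rfl fun k hk => ?_
    rw [Finset.mem_range] at hk
    rw [gam_srcV_dropP p k hk]
  have e2 : (∑ i : PathQ s t, ∑ j : PathQ s t,
      if j.val ++ i.val = p.val then wgt s t p.val * gam s t (srcV i) else 0)
      = wgt s t p.val * gsum s t p.val := by
    rw [Finset.sum_comm]
    rw [split_sum p (fun j i => wgt s t p.val * gam s t (srcV i))]
    rw [gsum_eq_range, Finset.mul_sum]
    refine Finset.sum_congr rfl fun k hk => ?_
    rw [Finset.mem_range] at hk
    rw [gam_srcV_dropP p k hk]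
  rw [e1, e2]
  ring

end Diag2

section Soliton

variable {s t : E → V} [Fintype (PathQ s t)]

/-- The Ricci eigenvalue of a basis path. -/
def rP (p : PathQ s t) : ℝ :=
  (1/2) * gsum s t p.val - (1/2) * (gam s t (tgtV p) * (Np s t (tgtV p) : ℝ)
    + gam s t (srcV p) * (Nm s t (srcV p) : ℝ))

lemma Ric_value (hQ : NoCycles s t) (p q : PathQ s t) :
    -(1/2) * TT1 p q + (1/4) * TT2 p q
      = if p = q then wgt s t p.val * rP p else 0 := by
  rcases eq_or_ne p q with rfl | h
  · rw [if_pos rfl, TT1_diag hQ p, TT2_diag hQ p, rP]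
    ring
  · rw [if_neg h, TT1_offdiag hQ h, TT2_offdiag hQ h]
    ring

lemma tgtV_append {x y : PathQ s t} (h : IsPath s t (x.val ++ y.val)) :
    tgtV (⟨x.val ++ y.val, h⟩ : PathQ s t) = tgtV y := by
  have h1 := tgt?_eqV (⟨x.val ++ y.val, h⟩ : PathQ s t)
  rw [tgt?_append x.val y.2.1, tgt?_eqV] at h1
  exact (Option.some_injective _ h1).symm

lemma srcV_append {x y : PathQ s t} (h : IsPath s t (x.val ++ y.val)) :
    srcV (⟨x.val ++ y.val, h⟩ : PathQ s t) = srcV x := by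
  have h1 := src?_eqV (⟨x.val ++ y.val, h⟩ : PathQ s t)
  rw [src?_append y.val x.2.1, src?_eqV] at h1
  exact (Option.some_injective _ h1).symm

lemma gsum_appendV {x y : PathQ s t} :
    gsum s t (x.val ++ y.val) = gsum s t x.val + gam s t (tgtV x) + gsum s t y.val :=
  gsum_append x.2.1 y.2.1

lemma rP_append {x y : PathQ s t} (h : IsPath s t (x.val ++ y.val)) :
    rP (⟨x.val ++ y.val, h⟩ : PathQ s t) = rP x + rP y + 1 := by
  have hj : tgtV x = srcV y := junction h
  rw [rP, rP, rP]
  simp only [tgtV_append h, srcV_append h, gsum_appendV (x := x) (y := y)]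
  have hg := gam_mul s t (tgtV x)
  rw [hj] at hg ⊢
  push_cast at hg ⊢
  nlinarith [hg]

/-- The derivation `D`. -/
def DD : nQ s t →ₗ[ℝ] nQ s t :=
  Finsupp.lsum ℝ fun p => LinearMap.smulRight (LinearMap.id : ℝ →ₗ[ℝ] ℝ)
    ((rP p + 1) • Finsupp.single p 1)

lemma DD_single (p : PathQ s t) (c : ℝ) :
    DD (Finsupp.single p c) = Finsupp.single p (c * (rP p + 1)) := by
  rw [DD, Finsupp.lsum_single, LinearMap.smulRight_apply, LinearMap.id_apply, smul_smul,
    Finsupp.smul_single', mul_one]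

lemma bra_zero_left (v : nQ s t) : bra s t 0 v = 0 := by
  rw [bra]
  simp

lemma bra_zero_right (u : nQ s t) : bra s t u 0 = 0 := by
  rw [bra]
  simp

lemma bra_add_left (u u' v : nQ s t) :
    bra s t (u + u') v = bra s t u v + bra s t u' v := by
  rw [bra_eq_sum, bra_eq_sum, bra_eq_sum, ← Finset.sum_add_distrib]
  refine Finset.sum_congr rfl fun x _ => ?_
  rw [← Finset.sum_add_distrib]
  refine Finset.sum_congr rfl fun y _ => ?_
  rw [Finsupp.add_apply, add_mul, add_smul]

lemma bra_add_right (u v v' : nQ s t) :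
    bra s t u (v + v') = bra s t u v + bra s t u v' := by
  rw [bra_eq_sum, bra_eq_sum, bra_eq_sum, ← Finset.sum_add_distrib]
  refine Finset.sum_congr rfl fun x _ => ?_
  rw [← Finset.sum_add_distrib]
  refine Finset.sum_congr rfl fun y _ => ?_
  rw [Finsupp.add_apply, mul_add, add_smul]

lemma DD_braBasis (hQ : NoCycles s t) (x y : PathQ s t) :
    DD (braBasis s t x y) = ((rP x + 1) + (rP y + 1)) • braBasis s t x y := by
  by_cases h : IsPath s t (x.val ++ y.val)
  · rw [bb_pos h, DD_single, Finsupp.smul_single', one_mul, mul_one, rP_append h]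
    exact congrArg _ (by ring)
  · by_cases h' : IsPath s t (y.val ++ x.val)
    · rw [bb_neg h h', map_neg, DD_single, smul_neg, Finsupp.smul_single', one_mul, mul_one,
        rP_append (x := y) (y := x) h']
      exact congrArg Neg.neg (congrArg _ (by ring))
    · rw [bb_zero h h']
      simp

lemma DD_derivation (hQ : NoCycles s t) (u v : nQ s t) :
    DD (bra s t u v) = bra s t (DD u) v + bra s t u (DD v) := by
  induction u using Finsupp.induction_linear with
  | zero => simp [bra_zero_left]
  | add f g hf hg =>
    rw [bra_add_left, map_add, hf, hg, map_add, bra_add_left, bra_add_left]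
    abel
  | single x c =>
    induction v using Finsupp.induction_linear with
    | zero => simp [bra_zero_right]
    | add f g hf hg =>
      rw [bra_add_right, map_add, hf, hg, map_add, bra_add_right, bra_add_right]
      abel
    | single y d =>
      rw [bra_single_single, map_smul, DD_braBasis hQ, DD_single, DD_single,
        bra_single_single, bra_single_single, smul_smul, ← add_smul]
      congr 1
      ring

end Soliton

section Aut

variable {s t : E → V} {f : E → E}

lemma isPath_map_iff (hf : IsQuivAut s t f) (l : List E) :
    IsPath s t (l.map f) ↔ IsPath s t l := by
  simp only [IsPath, ne_eq, List.map_eq_nil_iff, List.Chain', List.isChain_map]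
  constructor
  · rintro ⟨h0, hc⟩
    exact ⟨h0, hc.imp fun {a b} hab => (hf.2 a b).mpr hab⟩
  · rintro ⟨h0, hc⟩
    exact ⟨h0, hc.imp fun {a b} hab => (hf.2 a b).mp hab⟩

/-- `f` as an equivalence. -/
def Fequiv (hf : IsQuivAut s t f) : E ≃ E := Equiv.ofBijective f hf.1

lemma map_symm_map (hf : IsQuivAut s t f) (l : List E) :
    (l.map (Fequiv hf).symm).map f = l := by
  rw [List.map_map]
  have hcomp : f ∘ (Fequiv hf).symm = id := by
    funext x
    show f ((Fequiv hf).symm x) = x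
    exact (Fequiv hf).apply_symm_apply x
  rw [hcomp, List.map_id]

lemma src_cond_map (hf : IsQuivAut s t f) (a : E) (i : PathQ s t) :
    src? s i.val = some (t a) ↔ src? s (i.val.map f) = some (t (f a)) := by
  rw [src?_eq i.val i.2.1, src?_eq (i.val.map f) (by simp [i.2.1]),
    List.head_map]
  rw [Option.some_inj, Option.some_inj, eq_comm (a := s (i.val.head i.2.1)),
    eq_comm (a := s (f (i.val.head i.2.1)))]
  exact hf.2 a _

lemma tgt_cond_map (hf : IsQuivAut s t f) (b : E) (i : PathQ s t) :
    tgt? t i.val = some (s b) ↔ tgt? t (i.val.map f) = some (s (f b)) := by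
  rw [tgt?_eq i.val i.2.1, tgt?_eq (i.val.map f) (by simp [i.2.1]),
    List.getLast_map]
  rw [Option.some_inj, Option.some_inj]
  exact hf.2 _ b

variable [Fintype (PathQ s t)]

/-- The induced map on paths. -/
def Pmap (hf : IsQuivAut s t f) (i : PathQ s t) : PathQ s t :=
  ⟨i.val.map f, (isPath_map_iff hf i.val).mpr i.2⟩

/-- The induced inverse map on paths. -/
def Pmapinv (hf : IsQuivAut s t f) (i : PathQ s t) : PathQ s t :=
  ⟨i.val.map (Fequiv hf).symm, by
    have := (isPath_map_iff hf (i.val.map (Fequiv hf).symm))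
    rw [map_symm_map hf i.val] at this
    exact this.mp i.2⟩

lemma Pmap_inv_left (hf : IsQuivAut s t f) (i : PathQ s t) :
    Pmap hf (Pmapinv hf i) = i := Subtype.ext (map_symm_map hf i.val)

lemma Pmap_inv_right (hf : IsQuivAut s t f) (i : PathQ s t) :
    Pmapinv hf (Pmap hf i) = i := by
  apply Subtype.ext
  show (i.val.map f).map (Fequiv hf).symm = i.val
  rw [List.map_map]
  have hcomp : (Fequiv hf).symm ∘ f = id := by
    funext x
    show (Fequiv hf).symm (f x) = x
    have : f x = (Fequiv hf) x := rfl
    rw [this, Equiv.symm_apply_apply]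
  rw [hcomp, List.map_id]

lemma Np_map (hf : IsQuivAut s t f) (a : E) : Np s t (t (f a)) = Np s t (t a) := by
  rw [Np, Np]
  refine (Finset.card_nbij' (Pmap hf) (Pmapinv hf) ?_ ?_ ?_ ?_).symm
  · intro i hi
    rw [Finset.mem_coe, Finset.mem_filter] at hi ⊢
    exact ⟨Finset.mem_univ _, (src_cond_map hf a i).mp hi.2⟩
  · intro i hi
    rw [Finset.mem_coe, Finset.mem_filter] at hi ⊢
    refine ⟨Finset.mem_univ _, ?_⟩
    rw [src_cond_map hf a (Pmapinv hf i)]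
    show src? s (Pmap hf (Pmapinv hf i)).val = _
    rw [Pmap_inv_left hf i]
    exact hi.2
  · intro i _
    exact Pmap_inv_right hf i
  · intro i _
    exact Pmap_inv_left hf i

lemma Nm_map (hf : IsQuivAut s t f) {a b : E} (hab : t a = s b) :
    Nm s t (t (f a)) = Nm s t (t a) := by
  have hab' : t (f a) = s (f b) := (hf.2 a b).mp hab
  rw [Nm, Nm, hab, hab']
  refine (Finset.card_nbij' (Pmap hf) (Pmapinv hf) ?_ ?_ ?_ ?_).symm
  · intro i hi
    rw [Finset.mem_coe, Finset.mem_filter] at hi ⊢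
    exact ⟨Finset.mem_univ _, (tgt_cond_map hf b i).mp hi.2⟩
  · intro i hi
    rw [Finset.mem_coe, Finset.mem_filter] at hi ⊢
    refine ⟨Finset.mem_univ _, ?_⟩
    rw [tgt_cond_map hf b (Pmapinv hf i)]
    show tgt? t (Pmap hf (Pmapinv hf i)).val = _
    rw [Pmap_inv_left hf i]
    exact hi.2
  · intro i _
    exact Pmap_inv_right hf i
  · intro i _
    exact Pmap_inv_left hf i

lemma gam_map (hf : IsQuivAut s t f) {a b : E} (hab : t a = s b) :
    gam s t (t (f a)) = gam s t (t a) := by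
  rw [gam, gam, Np_map hf a, Nm_map hf hab]

lemma wgt_cons_cons (a b : E) (r : List E) :
    wgt s t (a :: b :: r) = gam s t (t a) * wgt s t (b :: r) := by
  simp [wgt]

lemma wgt_map (hf : IsQuivAut s t f) : ∀ {l : List E}, IsPath s t l →
    wgt s t (l.map f) = wgt s t l := by
  intro l
  induction l with
  | nil => intro _; simp
  | cons a m ih =>
    intro hl
    cases m with
    | nil => simp [wgt]
    | cons b r =>
      have hab : t a = s b := by
        have := hl.2
        rw [List.Chain', List.isChain_cons_cons] at this
        exact this.1
      have hm : IsPath s t (b :: r) :=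
        (show IsPath s t ([a] ++ (b :: r)) by simpa using hl).of_append_right (by simp)
      show wgt s t (f a :: f b :: r.map f) = _
      rw [wgt_cons_cons, wgt_cons_cons]
      rw [show (f b :: r.map f) = (b :: r).map f from rfl, ih hm, gam_map hf hab]

lemma wgt_Pmap (hf : IsQuivAut s t f) (p : PathQ s t) :
    wgt s t (Pmap hf p).val = wgt s t p.val := wgt_map hf p.2

end Aut

section Assemble

variable {s t : E → V} [Fintype (PathQ s t)]

lemma T_single {f : E → E} (hf : IsQuivAut s t f) (T : nQ s t →ₗ[ℝ] nQ s t)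
    (hT : ActsAs s t f T) (p : PathQ s t) (c : ℝ) :
    T (Finsupp.single p c) = Finsupp.single (Pmap hf p) c := by
  have h' : IsPath s t (p.val.map f) := (isPath_map_iff hf p.val).mpr p.2
  have h1 : T (Finsupp.single p 1) = Finsupp.single (Pmap hf p) 1 := hT p.val p.2 h'
  calc T (Finsupp.single p c) = T (c • Finsupp.single p 1) := by
        rw [Finsupp.smul_single, smul_eq_mul, mul_one]
    _ = c • T (Finsupp.single p 1) := map_smul T c _
    _ = Finsupp.single (Pmap hf p) c := by
        rw [h1, Finsupp.smul_single, smul_eq_mul, mul_one]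

lemma Pmap_injective {f : E → E} (hf : IsQuivAut s t f) {p q : PathQ s t}
    (h : Pmap hf p = Pmap hf q) : p = q := by
  rw [← Pmap_inv_right hf p, ← Pmap_inv_right hf q, h]

lemma B_invariant {f : E → E} (hf : IsQuivAut s t f) (T : nQ s t →ₗ[ℝ] nQ s t)
    (hT : ActsAs s t f T) (u v : nQ s t) :
    Bform s t (T u) (T v) = Bform s t u v := by
  induction u using Finsupp.induction_linear with
  | zero => simp
  | add g g' hg hg' =>
    simp only [map_add, LinearMap.add_apply, hg, hg']
  | single p c =>
    induction v using Finsupp.induction_linear with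
    | zero => simp
    | add g g' hg hg' => simp only [map_add, LinearMap.add_apply, hg, hg']
    | single q d =>
      rw [T_single hf T hT, T_single hf T hT, Bform_single_single, Bform_single_single]
      rcases eq_or_ne p q with rfl | h
      · rw [if_pos rfl, if_pos rfl, wgt_Pmap hf]
      · rw [if_neg h, if_neg fun hc => h (Pmap_injective hf hc)]

lemma ebar_eq (i : PathQ s t) :
    ebar s t (Bform s t) i = Finsupp.single i ((Real.sqrt (wgt s t i.val))⁻¹) := by
  rw [ebar, Bform_single_single, if_pos rfl, mul_one, mul_one,
    Finsupp.smul_single, smul_eq_mul, mul_one]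

lemma sq_inv_sqrt (i : PathQ s t) :
    (Real.sqrt (wgt s t i.val))⁻¹ * (Real.sqrt (wgt s t i.val))⁻¹ = (wgt s t i.val)⁻¹ := by
  rw [← mul_inv, Real.mul_self_sqrt (wgt_pos s t i.val).le]

lemma term1_eq (p i j : PathQ s t) :
    Bform s t (bra s t (Finsupp.single p 1) (ebar s t (Bform s t) i))
      (ebar s t (Bform s t) j)
    = (Real.sqrt (wgt s t i.val))⁻¹ * ((Real.sqrt (wgt s t j.val))⁻¹ *
        Bform s t (braBasis s t p i) (Finsupp.single j 1)) := by
  rw [ebar_eq, ebar_eq, bra_single_single, map_smul, LinearMap.smul_apply, smul_eq_mul,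
    Bform_single_right]
  try rw [Bform_single_right]
  ring

lemma term2_eq (p i j : PathQ s t) :
    Bform s t (bra s t (ebar s t (Bform s t) i) (ebar s t (Bform s t) j))
      (Finsupp.single p 1)
    = (Real.sqrt (wgt s t i.val))⁻¹ * ((Real.sqrt (wgt s t j.val))⁻¹ *
        Bform s t (braBasis s t i j) (Finsupp.single p 1)) := by
  rw [ebar_eq, ebar_eq, bra_single_single, map_smul, LinearMap.smul_apply, smul_eq_mul,
    Bform_single_right]
  try rw [Bform_single_right]
  ring

lemma sums_eq_TT1 (p q : PathQ s t) :
    (∑ᶠ i : PathQ s t, ∑ᶠ j : PathQ s t,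
      Bform s t (bra s t (Finsupp.single p 1) (ebar s t (Bform s t) i))
        (ebar s t (Bform s t) j) *
      Bform s t (bra s t (Finsupp.single q 1) (ebar s t (Bform s t) i))
        (ebar s t (Bform s t) j)) = TT1 p q := by
  rw [finsum_eq_sum_of_fintype, TT1]
  refine Finset.sum_congr rfl fun i _ => ?_
  rw [finsum_eq_sum_of_fintype]
  refine Finset.sum_congr rfl fun j _ => ?_
  rw [term1_eq, term1_eq]
  rw [show ∀ a b c d : ℝ, (a * (b * c)) * (a * (b * d)) = (a*a) * ((b*b) * (c*d)) from
    fun a b c d => by ring]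
  rw [sq_inv_sqrt, sq_inv_sqrt]

lemma sums_eq_TT2 (p q : PathQ s t) :
    (∑ᶠ i : PathQ s t, ∑ᶠ j : PathQ s t,
      Bform s t (bra s t (ebar s t (Bform s t) i) (ebar s t (Bform s t) j))
        (Finsupp.single p 1) *
      Bform s t (bra s t (ebar s t (Bform s t) i) (ebar s t (Bform s t) j))
        (Finsupp.single q 1)) = TT2 p q := by
  rw [finsum_eq_sum_of_fintype, TT2]
  refine Finset.sum_congr rfl fun i _ => ?_
  rw [finsum_eq_sum_of_fintype]
  refine Finset.sum_congr rfl fun j _ => ?_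
  rw [term2_eq, term2_eq]
  rw [show ∀ a b c d : ℝ, (a * (b * c)) * (a * (b * d)) = (a*a) * ((b*b) * (c*d)) from
    fun a b c d => by ring]
  rw [sq_inv_sqrt, sq_inv_sqrt]

end Assemble


/-- **Main theorem.** Let `Q` be a finite quiver without cycles. Then
there exists an inner product `⟨,⟩ = B` on `n_Q` such that: (ii) `Path(Q)` is an
orthogonal basis; (iii) `B` is preserved by the action of `Aut(Q)`; and (i) `B` is an
algebraic Ricci soliton: the Ricci operator of `(n_Q, B)` (determined by the standard
formula with respect to the orthonormal basis of normalized paths) satisfies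
`Ric = -id + D` for a derivation `D` of `n_Q` which is diagonal with respect to
`Path(Q)`. -/
theorem nQ_admits_algebraic_ricci_soliton [Finite V] [Finite E] (s t : E → V)
    (hQ : NoCycles s t) :
    ∃ B : nQ s t →ₗ[ℝ] nQ s t →ₗ[ℝ] ℝ,
      (∀ u v : nQ s t, B u v = B v u) ∧
      (∀ u : nQ s t, u ≠ 0 → 0 < B u u) ∧
      (∀ p q : PathQ s t, p ≠ q →
        B (Finsupp.single p 1) (Finsupp.single q 1) = 0) ∧
      (∀ f : E → E, IsQuivAut s t f → ∀ T : nQ s t →ₗ[ℝ] nQ s t, ActsAs s t f T →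
        ∀ u v : nQ s t, B (T u) (T v) = B u v) ∧
      ∃ D : nQ s t →ₗ[ℝ] nQ s t,
        (∀ u v : nQ s t, D (bra s t u v) = bra s t (D u) v + bra s t u (D v)) ∧
        (∀ p : PathQ s t, ∃ c : ℝ,
          D (Finsupp.single p 1) = c • Finsupp.single p 1) ∧
        (∀ Ric : nQ s t →ₗ[ℝ] nQ s t,
          (∀ X Y : nQ s t, B (Ric X) Y =
            -(1/2) * (∑ᶠ i : PathQ s t, ∑ᶠ j : PathQ s t,
              B (bra s t X (ebar s t B i)) (ebar s t B j) *
                B (bra s t Y (ebar s t B i)) (ebar s t B j))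
            + (1/4) * (∑ᶠ i : PathQ s t, ∑ᶠ j : PathQ s t,
              B (bra s t (ebar s t B i) (ebar s t B j)) X *
                B (bra s t (ebar s t B i) (ebar s t B j)) Y)) →
          Ric = -(LinearMap.id : nQ s t →ₗ[ℝ] nQ s t) + D) := by
  letI : Fintype (PathQ s t) := @Fintype.ofFinite _ (pathQ_finite hQ)
  refine ⟨Bform s t, Bform_symm, fun u hu => Bform_pos hu,
    fun p q hpq => by rw [Bform_single_single, if_neg hpq],
    fun f hf T hT u v => B_invariant hf T hT u v,
    DD, DD_derivation hQ,
    fun p => ⟨rP p + 1, by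
      rw [DD_single, Finsupp.smul_single, smul_eq_mul, mul_one, one_mul]⟩, ?_⟩
  intro Ric hRic
  have key : ∀ p : PathQ s t, Ric (Finsupp.single p 1)
      = -(Finsupp.single p 1) + DD (Finsupp.single p 1) := by
    intro p
    have hall : ∀ q : PathQ s t,
        Bform s t (Ric (Finsupp.single p 1)
          - (-(Finsupp.single p 1) + DD (Finsupp.single p 1)))
          (Finsupp.single q 1) = 0 := by
      intro q
      rw [map_sub, LinearMap.sub_apply, sub_eq_zero]
      rw [hRic (Finsupp.single p 1) (Finsupp.single q 1)]
      rw [sums_eq_TT1 p q, sums_eq_TT2 p q, Ric_value hQ p q, DD_single]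
      simp only [map_add, map_neg, LinearMap.add_apply, LinearMap.neg_apply]
      rw [Bform_single_single, Bform_single_single]
      rcases eq_or_ne p q with rfl | h
      · simp only [if_true]
        ring
      · simp only [if_neg h]
        ring
    have := Bform_eq_zero_iff _ hall
    exact sub_eq_zero.mp this
  apply Finsupp.lhom_ext
  intro p b
  have h1 : (Finsupp.single p b : nQ s t) = b • Finsupp.single p 1 := by
    rw [Finsupp.smul_single, smul_eq_mul, mul_one]
  have h2 : Ric (Finsupp.single p b) = -(Finsupp.single p b) + DD (Finsupp.single p b) := by
    calc Ric (Finsupp.single p b) = b • Ric (Finsupp.single p 1) := by rw [h1, map_smul]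
      _ = b • (-(Finsupp.single p 1) + DD (Finsupp.single p 1)) := by rw [key p]
      _ = -(Finsupp.single p b) + DD (Finsupp.single p b) := by
          rw [smul_add, smul_neg, ← map_smul, ← h1]
  rw [h2, LinearMap.add_apply, LinearMap.neg_apply, LinearMap.id_apply]

end
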